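/- Under the assumptions of the preceding self-adjointness theorem (quasi boundary triple, A₀ bounded below, ‖\overline{M(λ)}‖ → 0 as λ → −∞, B self-adjoint bounded above with the range/domain conditions), if additionally B ≤ 0, then min σ(A_[B]) ≥ min σ(A₀). -/

import Mathlib

open scoped InnerProductSpace


section helpers
variable {E : Type*} [NormedAddCommGroup E] [InnerProductSpace ℂ E]

lemma cre_symm (x y : E) : (⟪x, y⟫_ℂ).re = (⟪y, x⟫_ℂ).re := by
  simpa using inner_re_symm (𝕜 := ℂ) x y

lemma cre_self (x : E) : (⟪x, x⟫_ℂ).re = ‖x‖ ^ 2 := by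
  simpa using inner_self_eq_norm_sq (𝕜 := ℂ) x

lemma cre_norm_sub (x y : E) : ‖x - y‖ ^ 2 = ‖x‖ ^ 2 - 2 * (⟪x, y⟫_ℂ).re + ‖y‖ ^ 2 := by
  simpa using norm_sub_sq (𝕜 := ℂ) x y

lemma cre_smul_left (l : ℝ) (x y : E) : (⟪(l : ℂ) • x, y⟫_ℂ).re = l * (⟪x, y⟫_ℂ).re := by
  rw [inner_smul_left]
  simp [Complex.conj_ofReal, Complex.re_ofReal_mul]

lemma cre_smul_right (l : ℝ) (x y : E) : (⟪x, (l : ℂ) • y⟫_ℂ).re = l * (⟪x, y⟫_ℂ).re := by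
  rw [inner_smul_right]
  simp [Complex.re_ofReal_mul]

lemma cre_bound (x y : E) : -(‖x‖ * ‖y‖) ≤ (⟪x, y⟫_ℂ).re := by
  have h1 := norm_inner_le_norm (𝕜 := ℂ) x y
  have h2 : |(⟪x, y⟫_ℂ).re| ≤ ‖⟪x, y⟫_ℂ‖ := by
    exact Complex.abs_re_le_norm _
  have := neg_abs_le ((⟪x, y⟫_ℂ).re)
  linarith

lemma cre_abs_bound (x y : E) : |(⟪x, y⟫_ℂ).re| ≤ ‖x‖ * ‖y‖ := by
  have h1 := norm_inner_le_norm (𝕜 := ℂ) x y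
  have h2 : |(⟪x, y⟫_ℂ).re| ≤ ‖⟪x, y⟫_ℂ‖ := by
    exact Complex.abs_re_le_norm _
  linarith

end helpers


open LinearPMap in
lemma sa_symm' {H : Type*} [NormedAddCommGroup H] [InnerProductSpace ℂ H] [CompleteSpace H]
    {A : H →ₗ.[ℂ] H} (hA : IsSelfAdjoint A) (u v : A.domain) :
    ⟪A u, (v : H)⟫_ℂ = ⟪(u : H), A v⟫_ℂ := by
  have hd := hA.dense_domain
  have heq : A.adjoint = A := hA
  have hle : A ≤ A.adjoint := le_of_eq heq.symm
  obtain ⟨u', hu1, hu2⟩ := LinearPMap.exists_of_le hle u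
  rw [hu2, LinearPMap.adjoint_isFormalAdjoint hd u' v, ← hu1]

open LinearPMap in
/-- membership+value in `A` from the adjoint characterization -/
lemma sa_graph' {H : Type*} [NormedAddCommGroup H] [InnerProductSpace ℂ H] [CompleteSpace H]
    {A : H →ₗ.[ℂ] H} (hA : IsSelfAdjoint A) (x z : H)
    (hxz : ∀ t : A.domain, ⟪z, (t : H)⟫_ℂ = ⟪x, A t⟫_ℂ) :
    ∃ hx : x ∈ A.domain, A ⟨x, hx⟩ = z := by
  have hd := hA.dense_domain
  have heq : A.adjoint = A := hA
  have hmem : x ∈ A.adjoint.domain :=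
    LinearPMap.mem_adjoint_domain_of_exists _ ⟨z, hxz⟩
  have hval : A.adjoint ⟨x, hmem⟩ = z := LinearPMap.adjoint_apply_eq hd _ hxz
  have hle : A.adjoint ≤ A := le_of_eq heq
  obtain ⟨y', hy1, hy2⟩ := LinearPMap.exists_of_le hle ⟨x, hmem⟩
  have hy1' : x = (y' : H) := hy1
  have hx : x ∈ A.domain := hy1' ▸ y'.2
  refine ⟨hx, ?_⟩
  have : (⟨x, hx⟩ : A.domain) = y' := Subtype.ext hy1'
  rw [this, ← hy2, hval]

lemma sa_surj' {H : Type*} [NormedAddCommGroup H] [InnerProductSpace ℂ H] [CompleteSpace H]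
    {A : H →ₗ.[ℂ] H} (hA : IsSelfAdjoint A) (σ₀ : ℝ)
    (hlb : ∀ f : A.domain, σ₀ * ‖(f : H)‖ ^ 2 ≤ (⟪A f, (f : H)⟫_ℂ).re)
    {l : ℝ} (hl : l < σ₀) (y : H) :
    ∃ g : A.domain, A g - (l : ℂ) • (g : H) = y := by
  set L : A.domain →ₗ[ℂ] H :=
    { toFun := fun g => A g - (l : ℂ) • (g : H)
      map_add' := fun g g' => by
        simp only [LinearPMap.map_add, Submodule.coe_add, smul_add]
        abel
      map_smul' := fun c g => by
        simp only [LinearPMap.map_smul, Submodule.coe_smul, RingHom.id_apply, smul_sub,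
          smul_comm c (l : ℂ)] } with hL
  have hLapp : ∀ g : A.domain, L g = A g - (l : ℂ) • (g : H) := fun g => rfl
  have hc : (0 : ℝ) < σ₀ - l := by linarith
  -- lower bound
  have hlow : ∀ g : A.domain, (σ₀ - l) * ‖(g : H)‖ ≤ ‖L g‖ := by
    intro g
    have h1 : (σ₀ - l) * ‖(g : H)‖ ^ 2 ≤ (⟪L g, (g : H)⟫_ℂ).re := by
      have h2 : (⟪L g, (g : H)⟫_ℂ) = ⟪A g, (g : H)⟫_ℂ - (l : ℂ) * ⟪(g : H), (g : H)⟫_ℂ := by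
        rw [hLapp, inner_sub_left, inner_smul_left]
        norm_num
      have h3 : (⟪(g : H), (g : H)⟫_ℂ).re = ‖(g : H)‖ ^ 2 := by simpa using inner_self_eq_norm_sq (𝕜 := ℂ) ((g : H))
      have h4 : ((l : ℂ) * ⟪(g : H), (g : H)⟫_ℂ).re = l * ‖(g : H)‖ ^ 2 := by
        rw [Complex.re_ofReal_mul, h3]
      have h5 := hlb g
      rw [h2]
      simp only [Complex.sub_re, h4]
      linarith
    have h6 : (⟪L g, (g : H)⟫_ℂ).re ≤ ‖L g‖ * ‖(g : H)‖ := by simpa using re_inner_le_norm (𝕜 := ℂ) (L g) ((g : H))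
    rcases eq_or_lt_of_le (norm_nonneg (g : H)) with h7 | h7
    · rw [← h7, mul_zero]; exact norm_nonneg _
    · have := h1.trans h6
      rw [pow_two, ← mul_assoc] at this
      exact le_of_mul_le_mul_right this h7
  -- the range submodule
  set K := LinearMap.range L with hK
  have hKclosed : IsClosed (K : Set H) := by
    apply IsSeqClosed.isClosed
    intro u yy hu huy
    choose g hg using fun n => LinearMap.mem_range.mp (hu n)
    have hucauchy : CauchySeq u := huy.cauchySeq
    have hgc : CauchySeq (fun n => ((g n : H))) := by
      rw [Metric.cauchySeq_iff]
      intro ε hε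
      obtain ⟨N, hN⟩ := Metric.cauchySeq_iff.mp hucauchy ((σ₀ - l) * ε) (by positivity)
      refine ⟨N, fun m hm n hn => ?_⟩
      have h8 : L (g m - g n) = u m - u n := by rw [map_sub, hg, hg]
      have h9 := hlow (g m - g n)
      rw [h8] at h9
      have h10 : dist ((g m : H)) ((g n : H)) = ‖(g m : H) - (g n : H)‖ := dist_eq_norm _ _
      have h11 : ‖u m - u n‖ = dist (u m) (u n) := (dist_eq_norm _ _).symm
      have h12 := hN m hm n hn
      rw [h11] at h9
      have h13 : ((g m - g n : A.domain) : H) = (g m : H) - (g n : H) := rfl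
      rw [h13] at h9
      rw [h10]
      nlinarith [dist_nonneg (x := (g m : H)) (y := (g n : H))]
    obtain ⟨x, hx⟩ := cauchySeq_tendsto_of_complete hgc
    have hAg : ∀ n, A (g n) = u n + (l : ℂ) • ((g n : H)) := by
      intro n
      have := hg n
      rw [hLapp] at this
      rw [← this]; abel
    have hAgt : Filter.Tendsto (fun n => A (g n)) Filter.atTop (nhds (yy + (l : ℂ) • x)) := by
      simp only [hAg]
      exact huy.add (hx.const_smul _)
    have hmain : ∀ t : A.domain, ⟪yy + (l : ℂ) • x, (t : H)⟫_ℂ = ⟪x, A t⟫_ℂ := by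
      intro t
      have t1 : Filter.Tendsto (fun n => ⟪A (g n), (t : H)⟫_ℂ) Filter.atTop
          (nhds ⟪yy + (l : ℂ) • x, (t : H)⟫_ℂ) := hAgt.inner tendsto_const_nhds
      have t2 : Filter.Tendsto (fun n => ⟪A (g n), (t : H)⟫_ℂ) Filter.atTop
          (nhds ⟪x, A t⟫_ℂ) := by
        have : (fun n => ⟪A (g n), (t : H)⟫_ℂ) = fun n => ⟪((g n : H)), A t⟫_ℂ := by
          funext n; exact sa_symm' hA (g n) t
        rw [this]
        exact hx.inner tendsto_const_nhds
      exact tendsto_nhds_unique t1 t2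
    obtain ⟨hxd, hAx⟩ := sa_graph' hA x (yy + (l : ℂ) • x) hmain
    refine LinearMap.mem_range.mpr ⟨⟨x, hxd⟩, ?_⟩
    rw [hLapp, hAx]
    abel
  -- orthogonal complement trivial
  have horth : Kᗮ = ⊥ := by
    rw [Submodule.eq_bot_iff]
    intro u hu
    rw [Submodule.mem_orthogonal] at hu
    have hchar : ∀ t : A.domain, ⟪(l : ℂ) • u, (t : H)⟫_ℂ = ⟪u, A t⟫_ℂ := by
      intro t
      have h1 : ⟪L t, u⟫_ℂ = 0 := hu (L t) (LinearMap.mem_range.mpr ⟨t, rfl⟩)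
      rw [hLapp, inner_sub_left, inner_smul_left, sub_eq_zero] at h1
      have h2 : ⟪u, A t⟫_ℂ = (starRingEnd ℂ) ⟪A t, u⟫_ℂ := (inner_conj_symm _ _).symm
      rw [h2, h1]
      rw [inner_smul_left]
      simp only [map_mul, Complex.conj_conj, inner_conj_symm, Complex.conj_ofReal]
    obtain ⟨hud, hAu⟩ := sa_graph' hA u ((l : ℂ) • u) hchar
    have h3 := hlb ⟨u, hud⟩
    rw [hAu] at h3
    have h4 : (⟪(l : ℂ) • u, u⟫_ℂ).re = l * ‖u‖ ^ 2 := by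
      rw [inner_smul_left]
      have : (⟪u, u⟫_ℂ).re = ‖u‖ ^ 2 := by simpa using inner_self_eq_norm_sq (𝕜 := ℂ) u
      simp only [Complex.conj_ofReal, Complex.re_ofReal_mul, this]
    rw [h4] at h3
    have h3' : σ₀ * ‖u‖ ^ 2 ≤ l * ‖u‖ ^ 2 := h3
    have h6 : ‖u‖ ^ 2 ≤ 0 := by nlinarith [sq_nonneg ‖u‖]
    have : ‖u‖ = 0 := by nlinarith [norm_nonneg u, sq_nonneg ‖u‖]
    exact norm_eq_zero.mp this
  haveI : CompleteSpace K := hKclosed.completeSpace_coe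
  have hKtop : K = ⊤ := Submodule.orthogonal_eq_bot_iff.mp horth
  have hy : y ∈ K := hKtop ▸ Submodule.mem_top
  obtain ⟨g, hg⟩ := LinearMap.mem_range.mp hy
  exact ⟨g, hg⟩

set_option maxHeartbeats 2000000 in
/-- Under the assumptions of the semiboundedness theorem (quasi boundary
triple, `A₀` self-adjoint bounded below by `σ₀`, `‖Mbar λ‖ → 0` as `λ → −∞`, `B`
self-adjoint bounded above with the range/domain conditions), if additionally `B ≤ 0`,
then `min σ(A_[B]) ≥ min σ(A₀)`: every lower bound `σ₀` of `A₀` is a lower bound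
of `A_[B]`. -/
theorem stmt10
    {H G : Type*}
    [NormedAddCommGroup H] [InnerProductSpace ℂ H] [CompleteSpace H]
    [NormedAddCommGroup G] [InnerProductSpace ℂ G] [CompleteSpace G]
    (T : H →ₗ.[ℂ] H) (hTdense : Dense (T.domain : Set H))
    (Γ₀ Γ₁ : T.domain →ₗ[ℂ] G)
    -- abstract Green identity
    (hGreen : ∀ f g : T.domain,
      ⟪T f, (g : H)⟫_ℂ - ⟪(f : H), T g⟫_ℂ = ⟪Γ₁ f, Γ₀ g⟫_ℂ - ⟪Γ₀ f, Γ₁ g⟫_ℂ)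
    -- (Γ₀, Γ₁) has dense range
    (hdense : Dense (Set.range fun f : T.domain => (Γ₀ f, Γ₁ f)))
    -- A₀ = T ↾ ker Γ₀ is self-adjoint and bounded from below by σ₀
    (A₀ : H →ₗ.[ℂ] H) (hA₀sub : A₀.domain ≤ T.domain)
    (hA₀eq : ∀ f : A₀.domain, A₀ f = T ⟨f.1, hA₀sub f.2⟩)
    (hA₀dom : ∀ x (hx : x ∈ T.domain), x ∈ A₀.domain ↔ Γ₀ ⟨x, hx⟩ = 0)
    (hA₀sa : IsSelfAdjoint A₀)
    (σ₀ : ℝ)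
    (hA₀lb : ∀ f : A₀.domain, σ₀ * ‖(f : H)‖ ^ 2 ≤ (⟪A₀ f, (f : H)⟫_ℂ).re)
    -- Mbar λ is the (bounded) closure of the Weyl function M(λ) for λ < σ₀
    (Mbar : ℝ → (G →L[ℂ] G))
    (hWeyl : ∀ l : ℝ, l < σ₀ → ∀ f : T.domain,
      T f = (l : ℂ) • (f : H) → Mbar l (Γ₀ f) = Γ₁ f)
    -- (i) ‖Mbar λ‖ → 0 as λ → −∞
    (hdecay : Filter.Tendsto (fun l => ‖Mbar l‖) Filter.atBot (nhds 0))
    -- R λ = (Mbar λ)^{1/2}, the non-negative square root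
    (R : ℝ → (G →L[ℂ] G))
    (hRsa : ∀ l : ℝ, l < σ₀ → IsSelfAdjoint (R l))
    (hRnn : ∀ l : ℝ, l < σ₀ → ∀ x : G, 0 ≤ (⟪R l x, x⟫_ℂ).re)
    (hRR : ∀ l : ℝ, l < σ₀ → R l ∘L R l = Mbar l)
    -- B self-adjoint and bounded from above
    (B : G →ₗ.[ℂ] G) (hBsa : IsSelfAdjoint B)
    (hBub : ∃ c : ℝ, ∀ φ : B.domain, (⟪B φ, (φ : G)⟫_ℂ).re ≤ c * ‖(φ : G)‖ ^ 2)
    -- (ii) ran (Mbar λ)^{1/2} ⊆ dom B for all λ < σ₀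
    (hranR : ∀ l : ℝ, l < σ₀ → ∀ x : G, R l x ∈ B.domain)
    -- (iii) B (ran Mbar λ) ⊆ ran Γ₀ for all λ < σ₀
    (hBM : ∀ (l : ℝ), l < σ₀ → ∀ (x : G) (h : Mbar l x ∈ B.domain),
      B ⟨Mbar l x, h⟩ ∈ Set.range Γ₀)
    -- (iv) ran Γ₁ ⊆ dom B
    (hranΓ₁ : ∀ f : T.domain, Γ₁ f ∈ B.domain)
    -- (v) B (ran Γ₁) ⊆ ran Γ₀
    (hBΓ₁ : ∀ f : T.domain, B ⟨Γ₁ f, hranΓ₁ f⟩ ∈ Set.range Γ₀)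
    -- A = A_[B] = T ↾ {f ∈ dom T : Γ₀ f = B Γ₁ f}
    (A : H →ₗ.[ℂ] H) (hAsub : A.domain ≤ T.domain)
    (hAeq : ∀ f : A.domain, A f = T ⟨f.1, hAsub f.2⟩)
    (hAdom : ∀ x (hx : x ∈ T.domain),
      x ∈ A.domain ↔ Γ₀ ⟨x, hx⟩ = B ⟨Γ₁ ⟨x, hx⟩, hranΓ₁ ⟨x, hx⟩⟩)
    -- additionally B ≤ 0
    (hBneg : ∀ φ : B.domain, (⟪B φ, (φ : G)⟫_ℂ).re ≤ 0) :
    -- conclusion: min σ(A_[B]) ≥ min σ(A₀)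
    ∀ f : A.domain, σ₀ * ‖(f : H)‖ ^ 2 ≤ (⟪A f, (f : H)⟫_ℂ).re := by
  classical
  intro f
  set f' : T.domain := ⟨f.1, hAsub f.2⟩ with hf'def
  have hAf : A f = T f' := hAeq f
  set φ : G := Γ₁ f' with hφdef
  set ψ : G := Γ₀ f' with hψdef
  have hφmem : φ ∈ B.domain := hranΓ₁ f'
  have hψB : ψ = B ⟨φ, hφmem⟩ := (hAdom f.1 (hAsub f.2)).mp f.2
  set k : ℝ := (⟪φ, ψ⟫_ℂ).re with hkdef
  have hk : k ≤ 0 := by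
    have h1 := hBneg ⟨φ, hφmem⟩
    have h2 : k = (⟪B ⟨φ, hφmem⟩, φ⟫_ℂ).re := by
      rw [hkdef, hψB]; exact cre_symm _ _
    rw [h2]; exact h1
  set m : ℝ → ℝ := fun l => (⟪Mbar l ψ, ψ⟫_ℂ).re with hmdef
  have hm0 : ∀ l : ℝ, l < σ₀ → 0 ≤ m l := by
    intro l hl
    have h1 : Mbar l ψ = R l (R l ψ) := by rw [← hRR l hl]; rfl
    have h2 : ContinuousLinearMap.adjoint (R l) = R l :=
      ContinuousLinearMap.isSelfAdjoint_iff'.mp (hRsa l hl)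
    have h3 : ⟪Mbar l ψ, ψ⟫_ℂ = ⟪R l ψ, R l ψ⟫_ℂ := by
      rw [h1]
      nth_rewrite 1 [← h2]
      exact ContinuousLinearMap.adjoint_inner_left _ _ _
    rw [hmdef]
    simp only [h3, cre_self]
    positivity
  have hmabs : ∀ l : ℝ, |m l| ≤ ‖Mbar l‖ * ‖ψ‖ ^ 2 := by
    intro l
    have h1 := cre_abs_bound (Mbar l ψ) ψ
    have h2 : ‖Mbar l ψ‖ ≤ ‖Mbar l‖ * ‖ψ‖ := (Mbar l).le_opNorm ψ
    have h3 : ‖Mbar l ψ‖ * ‖ψ‖ ≤ ‖Mbar l‖ * ‖ψ‖ * ‖ψ‖ :=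
      mul_le_mul_of_nonneg_right h2 (norm_nonneg _)
    calc |m l| ≤ ‖Mbar l ψ‖ * ‖ψ‖ := h1
      _ ≤ ‖Mbar l‖ * ‖ψ‖ * ‖ψ‖ := h3
      _ = ‖Mbar l‖ * ‖ψ‖ ^ 2 := by ring
  -- decomposition
  have key : ∀ l : ℝ, l < σ₀ → ∃ h' : T.domain,
      (T h' = (l : ℂ) • ((h' : H))) ∧ (Γ₀ h' = ψ) ∧ ((f : H) - (h' : H)) ∈ A₀.domain := by
    intro l hl
    obtain ⟨g, hg⟩ := sa_surj' hA₀sa σ₀ hA₀lb hl (T f' - (l : ℂ) • ((f : H)))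
    set g' : T.domain := ⟨g.1, hA₀sub g.2⟩ with hg'def
    have hgT : A₀ g = T g' := hA₀eq g
    refine ⟨f' - g', ?_, ?_, ?_⟩
    · have h1 : T (f' - g') = T f' - T g' := LinearPMap.map_sub T f' g'
      have h2 : ((f' - g' : T.domain) : H) = (f : H) - (g : H) := rfl
      have h3 : T g' = T f' - (l : ℂ) • ((f : H)) + (l : ℂ) • ((g : H)) := by
        rw [← hgT, ← hg]; abel
      rw [h1, h3, h2, smul_sub]; abel
    · have h1 : Γ₀ g' = 0 := (hA₀dom g.1 (hA₀sub g.2)).mp g.2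
      rw [map_sub, h1, sub_zero]
    · have h2 : ((f' - g' : T.domain) : H) = (f : H) - (g : H) := rfl
      rw [h2]
      have : (f : H) - ((f : H) - (g : H)) = (g : H) := by abel
      rw [this]; exact g.2
  let hvec : ∀ l : ℝ, l < σ₀ → T.domain := fun l hl => (key l hl).choose
  have hspec1 : ∀ (l : ℝ) (hl : l < σ₀),
      T (hvec l hl) = (l : ℂ) • ((hvec l hl : H)) := fun l hl => (key l hl).choose_spec.1
  have hspec2 : ∀ (l : ℝ) (hl : l < σ₀), Γ₀ (hvec l hl) = ψ :=
    fun l hl => (key l hl).choose_spec.2.1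
  have hspec3 : ∀ (l : ℝ) (hl : l < σ₀), ((f : H) - (hvec l hl : H)) ∈ A₀.domain :=
    fun l hl => (key l hl).choose_spec.2.2
  have hspec4 : ∀ (l : ℝ) (hl : l < σ₀), Γ₁ (hvec l hl) = Mbar l ψ := by
    intro l hl
    have := hWeyl l hl (hvec l hl) (hspec1 l hl)
    rw [hspec2 l hl] at this
    exact this.symm
  -- E1
  have E1 : ∀ (l : ℝ) (hl : l < σ₀),
      σ₀ * ‖(f : H)‖ ^ 2 - 2 * (σ₀ - l) * (⟪(f : H), ((hvec l hl : H))⟫_ℂ).re + k - m l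
        ≤ (⟪T f', (f : H)⟫_ℂ).re := by
    intro l hl
    set h' : T.domain := hvec l hl with hh'def
    set hv : H := (h' : H) with hhvdef
    have hmem : (f : H) - hv ∈ A₀.domain := hspec3 l hl
    set g : A₀.domain := ⟨(f : H) - hv, hmem⟩ with hgdef
    set g' : T.domain := ⟨(f : H) - hv, hA₀sub hmem⟩ with hg'def
    have hgT : A₀ g = T g' := hA₀eq g
    have hf'sum : f' = g' + h' := by
      apply Subtype.ext
      show (f : H) = ((f : H) - hv) + hv
      abel
    have hgsub : g' = f' - h' := by
      apply Subtype.ext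
      show (f : H) - hv = (f : H) - hv
      rfl
    have s1 : ⟪T f', (f : H)⟫_ℂ = ⟪T g', (f : H)⟫_ℂ + ⟪T h', (f : H)⟫_ℂ := by
      rw [hf'sum, LinearPMap.map_add, inner_add_left]
    have hfsplit : (f : H) = ((g' : H)) + hv := by
      show (f : H) = ((f : H) - hv) + hv; abel
    have s2 : ⟪T g', (f : H)⟫_ℂ = ⟪T g', ((g' : H))⟫_ℂ + ⟪T g', hv⟫_ℂ := by
      conv_lhs => rw [hfsplit]
      rw [inner_add_right]
    have hΓ₀g' : Γ₀ g' = 0 := by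
      have := (hA₀dom ((f : H) - hv) (hA₀sub hmem)).mp hmem
      exact this
    have hΓ₁g' : Γ₁ g' = φ - Mbar l ψ := by
      rw [hgsub, map_sub, hspec4 l hl, hφdef]
    have s3 := hGreen g' h'
    rw [hΓ₀g', hspec2 l hl, hΓ₁g', inner_zero_left, sub_zero] at s3
    -- real parts
    have r1 : (⟪T h', (f : H)⟫_ℂ).re = l * (⟪(f : H), hv⟫_ℂ).re := by
      rw [hspec1 l hl, cre_smul_left, cre_symm]
    have r2 : (⟪(g' : H), T h'⟫_ℂ).re = l * ((⟪(f : H), hv⟫_ℂ).re - ‖hv‖ ^ 2) := by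
      rw [hspec1 l hl, cre_smul_right]
      have : ((g' : H)) = (f : H) - hv := rfl
      rw [this, inner_sub_left, Complex.sub_re, cre_self]
    have r4 : (⟪(φ - Mbar l ψ : G), ψ⟫_ℂ).re = k - m l := by
      rw [inner_sub_left, Complex.sub_re, hkdef, hmdef]
    have r3 : (⟪T g', hv⟫_ℂ).re
        = l * ((⟪(f : H), hv⟫_ℂ).re - ‖hv‖ ^ 2) + (k - m l) := by
      have := congrArg Complex.re s3
      rw [Complex.sub_re] at this
      rw [← r2, ← r4]
      linarith
    have r5 : σ₀ * ‖((g' : H))‖ ^ 2 ≤ (⟪T g', ((g' : H))⟫_ℂ).re := by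
      have h5 := hA₀lb g
      rw [hgT] at h5
      exact h5
    have r6 : ‖((g' : H))‖ ^ 2 = ‖(f : H)‖ ^ 2 - 2 * (⟪(f : H), hv⟫_ℂ).re + ‖hv‖ ^ 2 := by
      have : ((g' : H)) = (f : H) - hv := rfl
      rw [this, cre_norm_sub]
    have rtot : (⟪T f', (f : H)⟫_ℂ).re
        = (⟪T g', ((g' : H))⟫_ℂ).re + (⟪T g', hv⟫_ℂ).re + (⟪T h', (f : H)⟫_ℂ).re := by
      rw [s1, Complex.add_re, s2, Complex.add_re]
    have hposl : 0 ≤ (σ₀ - l) * ‖hv‖ ^ 2 :=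
      mul_nonneg (by linarith) (by positivity)
    have r5' : σ₀ * (‖(f : H)‖ ^ 2 - 2 * (⟪(f : H), hv⟫_ℂ).re + ‖hv‖ ^ 2)
        ≤ (⟪T g', ((g' : H))⟫_ℂ).re := by rw [← r6]; exact r5
    rw [rtot, r1, r3]
    linarith [r5', hposl]
  -- E2
  have E2 : ∀ (l : ℝ) (hl : l < σ₀),
      l * (⟪(f : H), ((hvec l hl : H))⟫_ℂ).re
        = (⟪T f', ((hvec l hl : H))⟫_ℂ).re - k + m l := by
    intro l hl
    set h' : T.domain := hvec l hl with hh'def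
    set hv : H := (h' : H) with hhvdef
    have s3 := hGreen f' h'
    rw [hspec2 l hl, hspec4 l hl] at s3
    have hΓ₁f' : Γ₁ f' = φ := rfl
    have hΓ₀f' : Γ₀ f' = ψ := rfl
    rw [hΓ₁f', hΓ₀f'] at s3
    have := congrArg Complex.re s3
    rw [Complex.sub_re, Complex.sub_re] at this
    have r1 : (⟪(f : H), T h'⟫_ℂ).re = l * (⟪(f : H), hv⟫_ℂ).re := by
      rw [hspec1 l hl, cre_smul_right]
    have r2 : (⟪ψ, Mbar l ψ⟫_ℂ).re = m l := by
      rw [hmdef]; exact cre_symm _ _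
    rw [r1, r2] at this
    rw [hkdef] at *
    linarith
  -- E3
  have E3 : ∀ (μ : ℝ) (hμ : μ < σ₀),
      (σ₀ - μ) * ‖((hvec μ hμ : H))‖ ^ 2
        ≤ 3 * (m ((μ + σ₀) / 2) - m μ) := by
    intro μ hμ
    have hlsig : (μ + σ₀) / 2 < σ₀ := by linarith
    set ha' : T.domain := hvec ((μ + σ₀) / 2) hlsig with hha'def
    set hb' : T.domain := hvec μ hμ with hhb'def
    set va : H := ((ha' : H)) with hvadef
    set vb : H := ((hb' : H)) with hvbdef
    set d' : T.domain := ha' - hb' with hd'def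
    have hdcoe : ((d' : H)) = va - vb := rfl
    have hΓ₀d : Γ₀ d' = 0 := by
      rw [hd'def, map_sub, hspec2 ((μ + σ₀) / 2) hlsig, hspec2 μ hμ, sub_self]
    have hdmem : ((d' : H)) ∈ A₀.domain := by
      refine (hA₀dom ((d' : H)) d'.2).mpr ?_
      have h0 : (⟨(d' : H), d'.2⟩ : T.domain) = d' := Subtype.ext rfl
      rw [h0, hΓ₀d]
    set dA : A₀.domain := ⟨(d' : H), hdmem⟩ with hdAdef
    have hdT : A₀ dA = T d' := by
      have h1 := hA₀eq dA
      have h2 : (⟨dA.1, hA₀sub dA.2⟩ : T.domain) = d' := Subtype.ext rfl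
      rw [h1, h2]
    have hTd : T d' = (((μ + σ₀) / 2 : ℝ) : ℂ) • va - (μ : ℂ) • vb := by
      rw [hd'def, LinearPMap.map_sub, hspec1 ((μ + σ₀) / 2) hlsig, hspec1 μ hμ]
    have hlbd := hA₀lb dA
    rw [hdT, hTd] at hlbd
    have hdA1 : ((dA : H)) = va - vb := rfl
    rw [hdA1] at hlbd
    have hexp : (⟪(((μ + σ₀) / 2 : ℝ) : ℂ) • va - (μ : ℂ) • vb, va - vb⟫_ℂ).re
        = ((μ + σ₀) / 2) * ‖va‖ ^ 2 - ((μ + σ₀) / 2 + μ) * (⟪va, vb⟫_ℂ).re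
          + μ * ‖vb‖ ^ 2 := by
      simp only [inner_sub_left, inner_sub_right, inner_smul_left, Complex.conj_ofReal,
        Complex.sub_re, Complex.re_ofReal_mul, cre_self]
      rw [cre_symm vb va]
      ring
    have hnd : ‖va - vb‖ ^ 2 = ‖va‖ ^ 2 - 2 * (⟪va, vb⟫_ℂ).re + ‖vb‖ ^ 2 :=
      cre_norm_sub va vb
    rw [hexp, hnd] at hlbd
    -- P2 (Green between the two defect elements)
    have hm1 : (⟪Mbar ((μ + σ₀) / 2) ψ, ψ⟫_ℂ).re = m ((μ + σ₀) / 2) := by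
      simp only [hmdef]
    have hm2 : (⟪ψ, Mbar μ ψ⟫_ℂ).re = m μ := by
      rw [cre_symm]
    have hre : ((μ + σ₀) / 2 - μ) * (⟪va, vb⟫_ℂ).re
        = m ((μ + σ₀) / 2) - m μ := by
      have s3 := hGreen ha' hb'
      rw [hspec2 ((μ + σ₀) / 2) hlsig, hspec2 μ hμ, hspec4 ((μ + σ₀) / 2) hlsig,
        hspec4 μ hμ, hspec1 ((μ + σ₀) / 2) hlsig, hspec1 μ hμ] at s3
      have h := congrArg Complex.re s3
      simp only [inner_smul_left, inner_smul_right, Complex.conj_ofReal,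
        Complex.sub_re, Complex.re_ofReal_mul] at h
      rw [hm1, hm2] at h
      rw [← hvadef, ← hvbdef] at h
      have h4 : (⟪vb, va⟫_ℂ).re = (⟪va, vb⟫_ℂ).re := cre_symm vb va
      nlinarith [h, h4]
    have ht : 0 < σ₀ - μ := by linarith
    have haAnn : (0:ℝ) ≤ ‖va‖ ^ 2 := by positivity
    have haMnn : (0:ℝ) ≤ ‖vb‖ ^ 2 := by positivity
    nlinarith [hlbd, hre, haAnn, haMnn]
  -- final assembly
  rw [hAf]
  apply le_of_forall_sub_le
  intro ε hε
  set D : ℝ := ‖T f'‖ with hDdef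
  have hD0 : 0 ≤ D := norm_nonneg _
  set C : ℝ := 2 * |σ₀| + 2 with hCdef
  have hC0 : 0 < C := by positivity
  set δ : ℝ := ε ^ 2 / (C ^ 2 * (D + 1) ^ 2 * (6 * (‖ψ‖ ^ 2 + 1))) with hδdef
  have hδ0 : 0 < δ := by positivity
  have hdec := Metric.tendsto_nhds.mp hdecay δ hδ0
  rw [Filter.eventually_atBot] at hdec
  obtain ⟨Λ, hΛ⟩ := hdec
  have hΛ' : ∀ l ≤ Λ, ‖Mbar l‖ < δ := by
    intro l hlΛ
    have := hΛ l hlΛ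
    rwa [Real.dist_0_eq_abs, abs_of_nonneg (norm_nonneg _)] at this
  set μ : ℝ := min Λ (min (2 * Λ - σ₀) (min (σ₀ - 1) (min (-1) (2 * σ₀)))) with hμdef
  have hμΛ : μ ≤ Λ := min_le_left _ _
  have hμ2 : μ ≤ 2 * Λ - σ₀ := le_trans (min_le_right _ _) (min_le_left _ _)
  have hμ3 : μ ≤ σ₀ - 1 :=
    le_trans (min_le_right _ _) (le_trans (min_le_right _ _) (min_le_left _ _))
  have hμ4 : μ ≤ -1 :=
    le_trans (min_le_right _ _) (le_trans (min_le_right _ _)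
      (le_trans (min_le_right _ _) (min_le_left _ _)))
  have hμ5 : μ ≤ 2 * σ₀ :=
    le_trans (min_le_right _ _) (le_trans (min_le_right _ _)
      (le_trans (min_le_right _ _) (min_le_right _ _)))
  have hμσ : μ < σ₀ := by linarith
  have hlLam : (μ + σ₀) / 2 ≤ Λ := by linarith
  set hv : H := ((hvec μ hμσ : H)) with hhvdef
  set a : ℝ := ‖hv‖ ^ 2 with hadef
  set rfh : ℝ := (⟪(f : H), hv⟫_ℂ).re with hrfhdef
  -- bound on a
  have hbd1 : (σ₀ - μ) * a ≤ 3 * (m ((μ + σ₀) / 2) - m μ) := E3 μ hμσ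
  have hmlam : |m ((μ + σ₀) / 2)| ≤ δ * ‖ψ‖ ^ 2 := by
    refine le_trans (hmabs _) ?_
    exact mul_le_mul_of_nonneg_right (le_of_lt (hΛ' _ hlLam)) (by positivity)
  have hmMu : |m μ| ≤ δ * ‖ψ‖ ^ 2 := by
    refine le_trans (hmabs _) ?_
    exact mul_le_mul_of_nonneg_right (le_of_lt (hΛ' _ hμΛ)) (by positivity)
  have ha0 : 0 ≤ a := by positivity
  have hbd2 : a ≤ 6 * δ * (‖ψ‖ ^ 2 + 1) := by
    have h1 : a ≤ (σ₀ - μ) * a := by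
      have h0 : (1:ℝ) * a ≤ (σ₀ - μ) * a :=
        mul_le_mul_of_nonneg_right (by linarith only [hμ3]) ha0
      linarith only [h0]
    have h2 : 3 * (m ((μ + σ₀) / 2) - m μ) ≤ 6 * (δ * ‖ψ‖ ^ 2) :=
      by linarith only [(abs_le.mp hmlam).2, (abs_le.mp hmMu).1]
    have h3 : 6 * (δ * ‖ψ‖ ^ 2) ≤ 6 * δ * (‖ψ‖ ^ 2 + 1) := by
      have h0 : (6 * δ) * (‖ψ‖ ^ 2) ≤ (6 * δ) * (‖ψ‖ ^ 2 + 1) :=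
        mul_le_mul_of_nonneg_left (by linarith only []) (by positivity)
      linarith only [h0]
    linarith only [h1, h2, h3, hbd1]
  have hδeq : 6 * δ * (‖ψ‖ ^ 2 + 1) = ε ^ 2 / (C ^ 2 * (D + 1) ^ 2) := by
    rw [hδdef]
    have h1 : (C : ℝ) ≠ 0 := ne_of_gt hC0
    have h2 : (D + 1 : ℝ) ≠ 0 := by positivity
    have h3 : (‖ψ‖ ^ 2 + 1 : ℝ) ≠ 0 := by positivity
    field_simp
  have hnorm : ‖hv‖ ≤ ε / (C * (D + 1)) := by
    have hq : 0 < ε / (C * (D + 1)) := by positivity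
    have h1 : a ≤ (ε / (C * (D + 1))) ^ 2 := by
      rw [hδeq] at hbd2
      have : (ε / (C * (D + 1))) ^ 2 = ε ^ 2 / (C ^ 2 * (D + 1) ^ 2) := by
        rw [div_pow]; ring_nf
      rw [this]
      exact hbd2
    by_contra hcon
    push_neg at hcon
    have h2 : (ε / (C * (D + 1))) ^ 2 < ‖hv‖ ^ 2 := by
      rw [pow_two, pow_two]
      exact mul_self_lt_mul_self (le_of_lt hq) hcon
    rw [hadef] at h1
    linarith only [h1, h2]
  -- the w argument
  set w : ℝ := 2 * (σ₀ - μ) / (-μ) with hwdef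
  have hμneg : 0 < -μ := by linarith
  have hμ0 : μ ≠ 0 := by intro h; rw [h] at hμ4; linarith
  have hw1 : 1 ≤ w := by
    rw [hwdef, le_div_iff₀ hμneg]
    linarith only [hμ5]
  have hwC : w ≤ C := by
    rw [hwdef, div_le_iff₀ hμneg]
    have e1 : 2 * |σ₀| * 1 ≤ 2 * |σ₀| * (-μ) :=
      mul_le_mul_of_nonneg_left (by linarith only [hμ4]) (by positivity)
    have e2 := le_abs_self σ₀
    rw [hCdef]
    nlinarith [e1, e2, hμ4]
  have hwX : w * (μ * rfh) = -2 * (σ₀ - μ) * rfh := by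
    rw [hwdef]
    field_simp
  have he2 := E2 μ hμσ
  have he1 := E1 μ hμσ
  rw [← hhvdef, ← hrfhdef] at he2 he1
  have hTfh : -(D * ‖hv‖) ≤ (⟪T f', hv⟫_ℂ).re := cre_bound (T f') hv
  have hm0μ : 0 ≤ m μ := hm0 μ hμσ
  -- combine
  have hcomb : -2 * (σ₀ - μ) * rfh + k - m μ ≥ -(C * D * ‖hv‖) := by
    have h1 : -2 * (σ₀ - μ) * rfh = w * ((⟪T f', hv⟫_ℂ).re - k + m μ) := by
      rw [← hwX, he2]
    rw [h1]
    have h2 : w * ((⟪T f', hv⟫_ℂ).re - k + m μ)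
        = w * (⟪T f', hv⟫_ℂ).re + w * (-k) + w * (m μ) := by ring
    have hw0 : (0:ℝ) < w := by linarith
    have hx : (0:ℝ) ≤ D * ‖hv‖ := by positivity
    have h4 : w * (-(D * ‖hv‖)) ≤ w * (⟪T f', hv⟫_ℂ).re :=
      mul_le_mul_of_nonneg_left hTfh (le_of_lt hw0)
    have h5 : w * (D * ‖hv‖) ≤ C * (D * ‖hv‖) := mul_le_mul_of_nonneg_right hwC hx
    have h6 : (0:ℝ) ≤ (w - 1) * (-k) := mul_nonneg (by linarith) (by linarith)
    have h7 : (0:ℝ) ≤ (w - 1) * (m μ) := mul_nonneg (by linarith only [hw1]) hm0μ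
    linarith only [h4, h5, h6, h7, hk, hm0μ]
  have hfinal : C * D * ‖hv‖ ≤ ε := by
    have h1 : C * D * ‖hv‖ ≤ C * D * (ε / (C * (D + 1))) := by
      apply mul_le_mul_of_nonneg_left hnorm (by positivity)
    have h2 : C * D * (ε / (C * (D + 1))) = ε * D / (D + 1) := by
      field_simp
    have h3 : ε * D / (D + 1) ≤ ε := by
      rw [div_le_iff₀ (by positivity : (0:ℝ) < D + 1)]
      nlinarith [hε, hD0]
    calc C * D * ‖hv‖ ≤ C * D * (ε / (C * (D + 1))) := h1
      _ = ε * D / (D + 1) := h2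
      _ ≤ ε := h3
  linarith only [he1, hcomb, hfinal]
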